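/- For fixed natural numbers r, t ≥ 0 with r + t ≥ 1, and for all positive reals n and y, one has 1/(n^r (n+y)^t) = (-1)^r * Σ_{j=0}^{t-1} C(j+r-1, j) / (y^{j+r} (n+y)^{t-j}) + Σ_{i=0}^{r-1} C(i+t-1, i) * (-1)^i / (n^{r-i} y^{t+i}), with the conventions C(-1,0)=1 and C(c,-1)=0 for c ≠ -1. -/

import Mathlib

open Real

/-- Binomial coefficient on integers with the conventions `C(-1,0) = 1`,
`C(c,-1) = 0` for `c ≠ -1`, and `C(-1,-1) = 1`. -/
noncomputable def binomC (a b : ℤ) : ℝ :=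
  if a = -1 ∧ (b = -1 ∨ b = 0) then 1
  else if b < 0 ∨ a < 0 then 0
  else (a.toNat.choose b.toNat : ℝ)

/-- `binomC` of natural arguments reduces to `Nat.choose` with truncated subtraction. -/
lemma binomC_eq_choose (k m : ℕ) :
    binomC ((k : ℤ) + m - 1) k = ((k + m - 1).choose k : ℝ) := by
  unfold binomC
  rcases Nat.eq_zero_or_pos (k + m) with h | h
  · obtain ⟨hk, hm⟩ := Nat.add_eq_zero.mp h
    subst hk; subst hm; norm_num
  · rw [if_neg (by rintro ⟨h1, -⟩; omega), if_neg (by omega)]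
    have h1 : ((k : ℤ) + m - 1).toNat = k + m - 1 := by omega
    rw [h1, Int.toNat_natCast]

lemma partial_fraction_key (r : ℕ) : ∀ t : ℕ, 1 ≤ r + t → ∀ n y : ℝ, 0 < n → 0 < y →
    1 / (n ^ r * (n + y) ^ t) =
      (-1 : ℝ) ^ r *
        ∑ j ∈ Finset.range t, ((j + r - 1).choose j : ℝ) / (y ^ (j + r) * (n + y) ^ (t - j))
      + ∑ i ∈ Finset.range r,
          ((i + t - 1).choose i : ℝ) * (-1 : ℝ) ^ i / (n ^ (r - i) * y ^ (t + i)) := by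
  induction r with
  | zero =>
    intro t ht n y hn hy
    simp only [Finset.range_zero, Finset.sum_empty, add_zero, pow_zero, one_mul, Nat.add_zero]
    rw [Finset.sum_eq_single 0]
    · simp
    · intro j hj hj0
      rw [Nat.choose_eq_zero_of_lt (by omega)]
      simp
    · intro h; simp at h; omega
  | succ r ihr =>
    intro t
    induction t with
    | zero =>
      intro _ n y hn hy
      simp only [Finset.range_zero, Finset.sum_empty, mul_zero, zero_add, pow_zero, mul_one,
        Nat.zero_sub, Nat.add_zero, Nat.zero_add]
      rw [Finset.sum_eq_single 0]
      · simp
      · intro i hi hi0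
        rw [Nat.choose_eq_zero_of_lt (by omega)]
        simp
      · intro h; simp at h
    | succ t iht =>
      intro _ n y hn hy
      have h1 := ihr (t + 1) (by omega) n y hn hy
      have h2 := iht (by omega) n y hn hy
      have hy' : y ≠ 0 := ne_of_gt hy
      have hn' : n ≠ 0 := ne_of_gt hn
      have hny : n + y ≠ 0 := by positivity
      have hrec : 1 / (n ^ (r+1) * (n + y) ^ (t+1))
          = y⁻¹ * (1 / (n ^ (r+1) * (n + y) ^ t)) - y⁻¹ * (1 / (n ^ r * (n + y) ^ (t+1))) := by
        field_simp
        ring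
      rw [hrec, h1, h2]
      have hS1 : ∑ j ∈ Finset.range (t+1),
            ((j + (r+1) - 1).choose j : ℝ) / (y ^ (j + (r+1)) * (n + y) ^ (t + 1 - j))
          = y⁻¹ * ∑ j ∈ Finset.range t,
              ((j + (r+1) - 1).choose j : ℝ) / (y ^ (j + (r+1)) * (n + y) ^ (t - j))
            + y⁻¹ * ∑ j ∈ Finset.range (t+1),
              ((j + r - 1).choose j : ℝ) / (y ^ (j + r) * (n + y) ^ (t + 1 - j)) := by
        rw [Finset.mul_sum, Finset.mul_sum,
          Finset.sum_range_succ' (fun j =>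
            ((j + (r+1) - 1).choose j : ℝ) / (y ^ (j + (r+1)) * (n + y) ^ (t + 1 - j))),
          Finset.sum_range_succ' (fun j =>
            y⁻¹ * (((j + r - 1).choose j : ℝ) / (y ^ (j + r) * (n + y) ^ (t + 1 - j))))]
        have e1 : ∑ j ∈ Finset.range t,
              ((j + 1 + (r+1) - 1).choose (j+1) : ℝ) / (y ^ (j + 1 + (r+1)) * (n + y) ^ (t + 1 - (j+1)))
            = ∑ j ∈ Finset.range t,
              (y⁻¹ * (((j + (r+1) - 1).choose j : ℝ) / (y ^ (j + (r+1)) * (n + y) ^ (t - j)))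
                + y⁻¹ * (((j + 1 + r - 1).choose (j+1) : ℝ) / (y ^ (j + 1 + r) * (n + y) ^ (t + 1 - (j+1))))) := by
          refine Finset.sum_congr rfl fun j hj => ?_
          have hc : (j + 1 + (r+1) - 1).choose (j+1) = (j+r).choose j + (j+r).choose (j+1) := by
            rw [show j + 1 + (r+1) - 1 = (j+r)+1 by omega]
            exact Nat.choose_succ_succ _ _
          rw [hc, show j + (r+1) - 1 = j + r by omega, show j + 1 + r - 1 = j + r by omega,
            show t + 1 - (j+1) = t - j by omega]
          push_cast
          field_simp
          ring
        rw [e1, Finset.sum_add_distrib]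
        have e0 : ((0 + (r+1) - 1).choose 0 : ℝ) / (y ^ (0 + (r+1)) * (n + y) ^ (t + 1 - 0))
            = y⁻¹ * (((0 + r - 1).choose 0 : ℝ) / (y ^ (0 + r) * (n + y) ^ (t + 1 - 0))) := by
          simp only [Nat.choose_zero_right, Nat.cast_one, Nat.zero_add]
          field_simp
          ring
        rw [e0]
        ring
      have hS2 : ∑ i ∈ Finset.range (r+1),
            ((i + (t+1) - 1).choose i : ℝ) * (-1 : ℝ) ^ i / (n ^ (r + 1 - i) * y ^ (t + 1 + i))
          = y⁻¹ * ∑ i ∈ Finset.range (r+1),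
              ((i + t - 1).choose i : ℝ) * (-1 : ℝ) ^ i / (n ^ (r + 1 - i) * y ^ (t + i))
            - y⁻¹ * ∑ i ∈ Finset.range r,
              ((i + (t+1) - 1).choose i : ℝ) * (-1 : ℝ) ^ i / (n ^ (r - i) * y ^ (t + 1 + i)) := by
        rw [Finset.mul_sum, Finset.mul_sum,
          Finset.sum_range_succ' (fun i =>
            ((i + (t+1) - 1).choose i : ℝ) * (-1 : ℝ) ^ i / (n ^ (r + 1 - i) * y ^ (t + 1 + i))),
          Finset.sum_range_succ' (fun i =>
            y⁻¹ * (((i + t - 1).choose i : ℝ) * (-1 : ℝ) ^ i / (n ^ (r + 1 - i) * y ^ (t + i))))]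
        have e1 : ∑ i ∈ Finset.range r,
              ((i + 1 + (t+1) - 1).choose (i+1) : ℝ) * (-1 : ℝ) ^ (i+1) / (n ^ (r + 1 - (i+1)) * y ^ (t + 1 + (i+1)))
            = ∑ i ∈ Finset.range r,
              (y⁻¹ * (((i + 1 + t - 1).choose (i+1) : ℝ) * (-1 : ℝ) ^ (i+1) / (n ^ (r + 1 - (i+1)) * y ^ (t + (i+1))))
                - y⁻¹ * (((i + (t+1) - 1).choose i : ℝ) * (-1 : ℝ) ^ i / (n ^ (r - i) * y ^ (t + 1 + i)))) := by
          refine Finset.sum_congr rfl fun i hi => ?_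
          have hc : (i + 1 + (t+1) - 1).choose (i+1) = (i+t).choose i + (i+t).choose (i+1) := by
            rw [show i + 1 + (t+1) - 1 = (i+t)+1 by omega]
            exact Nat.choose_succ_succ _ _
          rw [hc, show i + 1 + t - 1 = i + t by omega, show i + (t+1) - 1 = i + t by omega,
            show r + 1 - (i+1) = r - i by omega]
          push_cast
          field_simp
          ring
        rw [e1, Finset.sum_sub_distrib]
        have e0 : ((0 + (t+1) - 1).choose 0 : ℝ) * (-1 : ℝ) ^ 0 / (n ^ (r + 1 - 0) * y ^ (t + 1 + 0))
            = y⁻¹ * (((0 + t - 1).choose 0 : ℝ) * (-1 : ℝ) ^ 0 / (n ^ (r + 1 - 0) * y ^ (t + 0))) := by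
          simp only [Nat.choose_zero_right, Nat.cast_one, pow_zero]
          field_simp
          ring
        rw [e0]
        ring
      rw [hS1, hS2]
      ring

theorem partial_fraction (r t : ℕ) (hrt : 1 ≤ r + t) (n y : ℝ) (hn : 0 < n) (hy : 0 < y) :
    1 / (n ^ r * (n + y) ^ t) =
      (-1 : ℝ) ^ r *
        ∑ j ∈ Finset.range t, binomC ((j : ℤ) + r - 1) j / (y ^ (j + r) * (n + y) ^ (t - j))
      + ∑ i ∈ Finset.range r,
          binomC ((i : ℤ) + t - 1) i * (-1 : ℝ) ^ i / (n ^ (r - i) * y ^ (t + i)) := by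
  simp only [binomC_eq_choose]
  exact partial_fraction_key r t hrt n y hn hy
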